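/- Let (R, e, *, d, c) be a nontrivial amorphic C-algebra of degree n all of whose structure constants are integers, with sign ε. Then it is a fusion of a generalized affine C-algebra: there exist a nontrivial amorphic C-algebra (R', e', *', d', c') of the same degree n which is homogeneous with common degree d'_u = √n + ε for all u ∈ R'^#, a partition π' of R' with {e'} ∈ π', and a bijection φ : R → π' with φ(e) = {e'}, such that for all r, s, t ∈ R: d_r = Σ_{u∈φ(r)} d'_u and, for every w ∈ φ(t), c_{r,s}^t = Σ_{u∈φ(r)} Σ_{v∈φ(s)} c'_{u,v}^w. -/

import Mathlib

open Finset

/-- Data of a `C`-algebra: a unit `e`, an involution `inv` (written `*` in the paper),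
degrees `d`, and structure constants `c`. -/
structure CAlgebraData (R : Type*) where
  e : R
  inv : R → R
  d : R → ℝ
  c : R → R → R → ℝ

/-- The axioms of a `C`-algebra. -/
def IsCAlgebra {R : Type*} [Fintype R] [DecidableEq R] (A : CAlgebraData R) : Prop :=
  A.inv A.e = A.e ∧
  (∀ r, A.inv (A.inv r) = r) ∧
  (∀ r, 0 < A.d r) ∧
  (∀ s t, A.c A.e s t = if s = t then 1 else 0) ∧
  (∀ r t, A.c r A.e t = if r = t then 1 else 0) ∧
  (∀ r s t u, ∑ v, A.c r s v * A.c v t u = ∑ v, A.c r v u * A.c s t v) ∧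
  (∀ r s t, A.c r s t = A.c (A.inv s) (A.inv r) (A.inv t)) ∧
  (∀ r s, A.c r s A.e = if s = A.inv r then A.d r else 0) ∧
  A.d A.e = 1 ∧
  (∀ r, A.d (A.inv r) = A.d r) ∧
  (∀ r s, ∑ t, A.d t * A.c r s t = A.d r * A.d s)

/-- `π` is a partition of the (finite) type `R` into nonempty classes. -/
def IsPartition {R : Type*} [Fintype R] (π : Finset (Finset R)) : Prop :=
  (∀ S ∈ π, S.Nonempty) ∧ ∀ r : R, ∃! S, S ∈ π ∧ r ∈ S

/-- A `C`-algebra is amorphic if every partition of `R` containing `{e}` as a class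
gives rise to a fusion `C`-algebra. -/
def IsAmorphic {R : Type*} [Fintype R] [DecidableEq R] (A : CAlgebraData R) : Prop :=
  ∀ π : Finset (Finset R), IsPartition π → ({A.e} : Finset R) ∈ π →
    (∀ S ∈ π, S.image A.inv ∈ π) ∧
    ∀ S ∈ π, ∀ T ∈ π, ∀ U ∈ π, ∀ u ∈ U, ∀ v ∈ U,
      ∑ r ∈ S, ∑ s ∈ T, A.c r s u = ∑ r ∈ S, ∑ s ∈ T, A.c r s v

/-- The degree `n` of a `C`-algebra. -/
noncomputable def CAlgebraData.degree {R : Type*} [Fintype R] (A : CAlgebraData R) : ℝ :=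
  ∑ r, A.d r

/-- `ε ∈ {-1, 1}` is the sign of a (nontrivial amorphic) `C`-algebra. -/
def IsSign {R : Type*} [Fintype R] (A : CAlgebraData R) (ε : ℝ) : Prop :=
  (ε = -1 ∨ ε = 1) ∧ 0 < Real.sqrt A.degree + ε ∧
    ∀ r s t, r ≠ A.e → s ≠ A.e → t ≠ A.e → r ≠ s → s ≠ t → r ≠ t →
      A.c r s t = A.d r * A.d s / (Real.sqrt A.degree + ε) ^ 2

section Helpers

variable {X : Type*} [DecidableEq X]

open Finset

lemma sum_split1 (V : Finset X) (f : X → ℝ) (cst : ℝ) (a : X) (ha : a ∈ V)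
    (h : ∀ x ∈ V, x ≠ a → f x = cst) :
    ∑ x ∈ V, f x = f a + ((V.card : ℝ) - 1) * cst := by
  rw [← Finset.add_sum_erase V f ha]
  congr 1
  rw [Finset.sum_congr rfl (fun x hx => h x (Finset.mem_of_mem_erase hx) (Finset.ne_of_mem_erase hx)),
    Finset.sum_const, Finset.card_erase_of_mem ha, nsmul_eq_mul]
  congr 1
  have : 1 ≤ V.card := Finset.card_pos.mpr ⟨a, ha⟩
  push_cast [Nat.cast_sub this]
  ring

lemma sum_split2 (V : Finset X) (f : X → ℝ) (cst : ℝ) (a b : X) (ha : a ∈ V) (hb : b ∈ V)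
    (hab : a ≠ b) (h : ∀ x ∈ V, x ≠ a → x ≠ b → f x = cst) :
    ∑ x ∈ V, f x = f a + f b + ((V.card : ℝ) - 2) * cst := by
  rw [← Finset.add_sum_erase V f ha]
  rw [sum_split1 (V.erase a) f cst b (Finset.mem_erase.2 ⟨hab.symm, hb⟩)
    (fun x hx hxb => h x (Finset.mem_of_mem_erase hx) (Finset.ne_of_mem_erase hx) hxb)]
  rw [Finset.card_erase_of_mem ha]
  have : 1 ≤ V.card := Finset.card_pos.mpr ⟨a, ha⟩
  push_cast [Nat.cast_sub this]
  ring

lemma sum_split3 (V : Finset X) (f : X → ℝ) (cst : ℝ) (a b c : X) (ha : a ∈ V) (hb : b ∈ V)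
    (hc : c ∈ V) (hab : a ≠ b) (hac : a ≠ c) (hbc : b ≠ c)
    (h : ∀ x ∈ V, x ≠ a → x ≠ b → x ≠ c → f x = cst) :
    ∑ x ∈ V, f x = f a + f b + f c + ((V.card : ℝ) - 3) * cst := by
  rw [← Finset.add_sum_erase V f ha]
  rw [sum_split2 (V.erase a) f cst b c (Finset.mem_erase.2 ⟨hab.symm, hb⟩)
    (Finset.mem_erase.2 ⟨hac.symm, hc⟩) hbc
    (fun x hx hxb hxc => h x (Finset.mem_of_mem_erase hx) (Finset.ne_of_mem_erase hx) hxb hxc)]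
  rw [Finset.card_erase_of_mem ha]
  have : 1 ≤ V.card := Finset.card_pos.mpr ⟨a, ha⟩
  push_cast [Nat.cast_sub this]
  ring

lemma sum_split0 (V : Finset X) (f : X → ℝ) (cst : ℝ)
    (h : ∀ x ∈ V, f x = cst) :
    ∑ x ∈ V, f x = (V.card : ℝ) * cst := by
  rw [Finset.sum_congr rfl h, Finset.sum_const, nsmul_eq_mul]

end Helpers

/-- degrees of the generalized affine `C`-algebra -/
noncomputable def gd {X : Type*} [DecidableEq X] (e : X) (q : ℝ) : X → ℝ :=
  fun x => if x = e then 1 else q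

/-- structure constants of the generalized affine `C`-algebra -/
noncomputable def gc {X : Type*} [DecidableEq X] (e : X) (q ε : ℝ) : X → X → X → ℝ :=
  fun r s t =>
    if r = e then (if s = t then 1 else 0)
    else if s = e then (if r = t then 1 else 0)
    else if t = e then (if r = s then q else 0)
    else 1 + ε * ((if r = t then 1 else 0) + (if s = t then 1 else 0) + (if r = s then 1 else 0))
      + (if r = s ∧ s = t then 1 - ε * q else 0)

/-- characters of the generalized affine `C`-algebra -/
noncomputable def gchi {X : Type*} [DecidableEq X] (e : X) (q ε : ℝ) : X → X → ℝ :=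
  fun y r => if y = e then gd e q r else if r = e then 1
    else ε - (ε * q - 1) * (if r = y then 1 else 0)

/-- multiplicities -/
noncomputable def gmu {X : Type*} [DecidableEq X] (e : X) (q : ℝ) : X → ℝ :=
  fun y => if y = e then 1 else q
section Generic

open Finset

variable {X : Type*} [Fintype X] [DecidableEq X]

lemma gchi_e (e : X) (q ε : ℝ) (y : X) : gchi e q ε y e = 1 := by
  by_cases hy : y = e <;> simp [gchi, gd, hy]

lemma gMr (e : X) (q ε : ℝ) (hq : q ≠ 0) (hε2 : ε ^ 2 = 1)
    (hM : ((Fintype.card X : ℝ) - 1) * q = (q - ε) ^ 2 - 1) :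
    (((Finset.univ.erase e).card : ℝ)) = q - 2 * ε := by
  have h1 : (Finset.univ.erase e).card = Fintype.card X - 1 := by
    rw [Finset.card_erase_of_mem (Finset.mem_univ e), Finset.card_univ]
  have hpos : 1 ≤ Fintype.card X := Fintype.card_pos_iff.2 ⟨e⟩
  have h2 : (((Finset.univ.erase e).card : ℝ)) = (Fintype.card X : ℝ) - 1 := by
    rw [h1]; push_cast [Nat.cast_sub hpos]; ring
  rw [h2]
  have : ((Fintype.card X : ℝ) - 1) * q = (q - 2 * ε) * q := by
    rw [hM]; linear_combination hε2
  exact mul_right_cancel₀ hq this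

lemma generic_key1 (e : X) (q ε : ℝ) (hq : q ≠ 0) (hε1 : ε = -1 ∨ ε = 1)
    (hM : ((Fintype.card X : ℝ) - 1) * q = (q - ε) ^ 2 - 1) :
    ∀ y r s, ∑ t, gc e q ε r s t * gchi e q ε y t = gchi e q ε y r * gchi e q ε y s := by
  have hε2 : ε ^ 2 = 1 := by rcases hε1 with rfl | rfl <;> norm_num
  have hMr := gMr e q ε hq hε2 hM
  intro y r s
  by_cases hr : r = e
  · simp only [hr]
    have hstep : ∀ t, gc e q ε e s t * gchi e q ε y t
        = if s = t then gchi e q ε y t else 0 := by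
      intro t
      rw [show gc e q ε e s t = if s = t then 1 else 0 from by simp [gc], ite_mul, one_mul,
        zero_mul]
    rw [Finset.sum_congr rfl fun t _ => hstep t, Finset.sum_ite_eq]
    simp [gchi_e]
  by_cases hs : s = e
  · simp only [hs]
    have hstep : ∀ t, gc e q ε r e t * gchi e q ε y t
        = if r = t then gchi e q ε y t else 0 := by
      intro t
      rw [show gc e q ε r e t = if r = t then 1 else 0 from by simp [gc, hr], ite_mul, one_mul,
        zero_mul]
    rw [Finset.sum_congr rfl fun t _ => hstep t, Finset.sum_ite_eq]
    simp [gchi_e]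
  -- now r ≠ e, s ≠ e
  rw [← Finset.add_sum_erase _ _ (Finset.mem_univ e)]
  have hrV : r ∈ Finset.univ.erase e := Finset.mem_erase.2 ⟨hr, Finset.mem_univ r⟩
  have hsV : s ∈ Finset.univ.erase e := Finset.mem_erase.2 ⟨hs, Finset.mem_univ s⟩
  have hyV : y ≠ e → y ∈ Finset.univ.erase e :=
    fun hy => Finset.mem_erase.2 ⟨hy, Finset.mem_univ y⟩
  have her : e ≠ r := Ne.symm hr
  have hes : e ≠ s := Ne.symm hs
  by_cases hy : y = e
  · simp only [hy]
    by_cases hrs : r = s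
    · simp only [← hrs]
      rw [sum_split1 _ _ ((1 + ε * (0 + 0 + 1)) * q) r hrV ?_, hMr]
      · simp [gc, gchi, gd, hr, her]
        all_goals rcases hε1 with rfl | rfl <;> ring
      · intro x hx hxr
        have hxe : x ≠ e := (Finset.mem_erase.1 hx).1
        simp [gc, gchi, gd, hxe, Ne.symm hxe, hr, her, Ne.symm hxr, hxr]
    · rw [sum_split2 _ _ ((1 + ε * (0 + 0 + 0)) * q) r s hrV hsV hrs ?_, hMr]
      · simp [gc, gchi, gd, hr, hs, her, hes, hrs, Ne.symm hrs]
        all_goals rcases hε1 with rfl | rfl <;> ring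
      · intro x hx hxr hxs
        have hxe : x ≠ e := (Finset.mem_erase.1 hx).1
        simp [gc, gchi, gd, hxe, Ne.symm hxe, hr, hs, her, hes, Ne.symm hxr, hxr, Ne.symm hxs,
          hxs, hrs, Ne.symm hrs]
  · by_cases hrs : r = s
    · simp only [← hrs]
      by_cases hyr : y = r
      · simp only [hyr]
        rw [sum_split1 _ _ ((1 + ε * (0 + 0 + 1)) * ε) r hrV ?_, hMr]
        · simp [gc, gchi, gd, hr, her]
          all_goals rcases hε1 with rfl | rfl <;> ring
        · intro x hx hxr
          have hxe : x ≠ e := (Finset.mem_erase.1 hx).1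
          simp [gc, gchi, gd, hxe, Ne.symm hxe, hr, her, Ne.symm hxr, hxr]
      · have hry : r ≠ y := fun h => hyr h.symm
        rw [sum_split2 _ _ ((1 + ε * (0 + 0 + 1)) * ε) r y hrV (hyV hy) hry ?_, hMr]
        · simp [gc, gchi, gd, hr, her, hy, Ne.symm hy, hyr, hry]
          all_goals rcases hε1 with rfl | rfl <;> ring
        · intro x hx hxr hxy
          have hxe : x ≠ e := (Finset.mem_erase.1 hx).1
          simp [gc, gchi, gd, hxe, Ne.symm hxe, hr, her, hy, Ne.symm hy, Ne.symm hxr, hxr,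
            Ne.symm hxy, hxy]
    · by_cases hyr : y = r
      · simp only [hyr]
        rw [sum_split2 _ _ ((1 + ε * (0 + 0 + 0)) * ε) r s hrV hsV hrs ?_, hMr]
        · simp [gc, gchi, gd, hr, hs, her, hes, hrs, Ne.symm hrs]
          all_goals rcases hε1 with rfl | rfl <;> ring
        · intro x hx hxr hxs
          have hxe : x ≠ e := (Finset.mem_erase.1 hx).1
          simp [gc, gchi, gd, hxe, Ne.symm hxe, hr, hs, her, hes, Ne.symm hxr, hxr, Ne.symm hxs,
            hxs, hrs, Ne.symm hrs]
      · by_cases hys : y = s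
        · simp only [hys]
          rw [sum_split2 _ _ ((1 + ε * (0 + 0 + 0)) * ε) r s hrV hsV hrs ?_, hMr]
          · simp [gc, gchi, gd, hr, hs, her, hes, hrs, Ne.symm hrs]
            all_goals rcases hε1 with rfl | rfl <;> ring
          · intro x hx hxr hxs
            have hxe : x ≠ e := (Finset.mem_erase.1 hx).1
            simp [gc, gchi, gd, hxe, Ne.symm hxe, hr, hs, her, hes, Ne.symm hxr, hxr,
              Ne.symm hxs, hxs, hrs, Ne.symm hrs]
        · have hry : r ≠ y := fun h => hyr h.symm
          have hsy : s ≠ y := fun h => hys h.symm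
          rw [sum_split3 _ _ ((1 + ε * (0 + 0 + 0)) * ε) r s y hrV hsV (hyV hy) hrs hry hsy ?_,
            hMr]
          · simp [gc, gchi, gd, hr, hs, her, hes, hy, Ne.symm hy, hrs, Ne.symm hrs, hyr, hry,
              hys, hsy]
            all_goals rcases hε1 with rfl | rfl <;> ring
          · intro x hx hxr hxs hxy
            have hxe : x ≠ e := (Finset.mem_erase.1 hx).1
            simp [gc, gchi, gd, hxe, Ne.symm hxe, hr, hs, her, hes, hy, Ne.symm hy, Ne.symm hxr,
              hxr, Ne.symm hxs, hxs, Ne.symm hxy, hxy, hrs, Ne.symm hrs]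

lemma generic_key2 (e : X) (q ε : ℝ) (hq : q ≠ 0) (hε1 : ε = -1 ∨ ε = 1)
    (hM : ((Fintype.card X : ℝ) - 1) * q = (q - ε) ^ 2 - 1) :
    ∀ u u', ∑ y, gmu e q y * (gchi e q ε y u * gchi e q ε y u')
      = if u = u' then (1 + ((Fintype.card X : ℝ) - 1) * q) * gd e q u else 0 := by
  have hε2 : ε ^ 2 = 1 := by rcases hε1 with rfl | rfl <;> norm_num
  have hMr := gMr e q ε hq hε2 hM
  have hMcard : ((Fintype.card X : ℝ) - 1) = ((Finset.univ.erase e).card : ℝ) := by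
    rw [Finset.card_erase_of_mem (Finset.mem_univ e), Finset.card_univ]
    have hpos : 1 ≤ Fintype.card X := Fintype.card_pos_iff.2 ⟨e⟩
    push_cast [Nat.cast_sub hpos]; ring
  intro u u'
  rw [← Finset.add_sum_erase _ _ (Finset.mem_univ e), hMcard, hMr]
  by_cases hu : u = e
  · simp only [hu]
    by_cases hu' : u' = e
    · simp only [hu']
      rw [sum_split0 _ _ (q * (1 * 1)) ?_, hMr]
      · simp [gmu, gchi, gd]
        all_goals rcases hε1 with rfl | rfl <;> ring
      · intro x hx
        have hxe : x ≠ e := (Finset.mem_erase.1 hx).1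
        simp [gmu, gchi, gd, hxe]
    · rw [sum_split1 _ _ (q * (1 * ε)) u' (Finset.mem_erase.2 ⟨hu', Finset.mem_univ u'⟩) ?_, hMr]
      · simp [gmu, gchi, gd, hu', Ne.symm hu']
        all_goals rcases hε1 with rfl | rfl <;> ring
      · intro x hx hxu'
        have hxe : x ≠ e := (Finset.mem_erase.1 hx).1
        simp [gmu, gchi, gd, hxe, hu', Ne.symm hxu']
  · by_cases hu' : u' = e
    · simp only [hu']
      rw [sum_split1 _ _ (q * (ε * 1)) u (Finset.mem_erase.2 ⟨hu, Finset.mem_univ u⟩) ?_, hMr]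
      · simp [gmu, gchi, gd, hu, Ne.symm hu]
        all_goals rcases hε1 with rfl | rfl <;> ring
      · intro x hx hxu
        have hxe : x ≠ e := (Finset.mem_erase.1 hx).1
        simp [gmu, gchi, gd, hxe, hu, Ne.symm hxu]
    · by_cases huu : u = u'
      · simp only [← huu]
        rw [sum_split1 _ _ (q * (ε * ε)) u (Finset.mem_erase.2 ⟨hu, Finset.mem_univ u⟩) ?_, hMr]
        · simp [gmu, gchi, gd, hu]
          all_goals rcases hε1 with rfl | rfl <;> ring
        · intro x hx hxu
          have hxe : x ≠ e := (Finset.mem_erase.1 hx).1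
          simp [gmu, gchi, gd, hxe, hu, Ne.symm hxu]
      · rw [sum_split2 _ _ (q * (ε * ε)) u u'
            (Finset.mem_erase.2 ⟨hu, Finset.mem_univ u⟩)
            (Finset.mem_erase.2 ⟨hu', Finset.mem_univ u'⟩) huu ?_, hMr]
        · simp [gmu, gchi, gd, hu, hu', huu, Ne.symm huu]
          all_goals rcases hε1 with rfl | rfl <;> ring
        · intro x hx hxu hxu'
          have hxe : x ≠ e := (Finset.mem_erase.1 hx).1
          simp [gmu, gchi, gd, hxe, hu, hu', Ne.symm hxu, Ne.symm hxu']

end Generic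
section Generic2

open Finset

variable {X : Type*} [Fintype X] [DecidableEq X]

lemma gc_comm (e : X) (q ε : ℝ) (r s t : X) : gc e q ε r s t = gc e q ε s r t := by
  by_cases hr : r = e
  · by_cases hs : s = e
    · rw [hr, hs]
    · simp [gc, hr, hs, Ne.symm hs, eq_comm]
  · by_cases hs : s = e
    · simp [gc, hr, hs, Ne.symm hr, eq_comm]
    · by_cases hrs : r = s
      · rw [hrs]
      · have h1 : ¬(r = s ∧ s = t) := fun h => hrs h.1
        have h2 : ¬(s = r ∧ r = t) := fun h => hrs h.1.symm
        simp only [gc, if_neg hr, if_neg hs, if_neg hrs, if_neg (Ne.symm hrs), if_neg h1,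
          if_neg h2]
        split_ifs <;> first | ring | tauto

lemma gd_pos (e : X) (q : ℝ) (hq : 0 < q) (x : X) : 0 < gd e q x := by
  unfold gd; split <;> norm_num [hq]

lemma gsum_d (e : X) (q : ℝ) :
    ∑ x, gd e q x = 1 + ((Fintype.card X : ℝ) - 1) * q := by
  rw [← Finset.add_sum_erase _ _ (Finset.mem_univ e)]
  rw [sum_split0 _ _ q (fun x hx => by simp [gd, (Finset.mem_erase.1 hx).1])]
  have hpos : 1 ≤ Fintype.card X := Fintype.card_pos_iff.2 ⟨e⟩
  rw [Finset.card_erase_of_mem (Finset.mem_univ e), Finset.card_univ]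
  push_cast [Nat.cast_sub hpos]
  simp [gd]

theorem generic_isC (e : X) (q ε : ℝ) (hq : 0 < q) (hε1 : ε = -1 ∨ ε = 1)
    (hM : ((Fintype.card X : ℝ) - 1) * q = (q - ε) ^ 2 - 1) :
    IsCAlgebra (⟨e, id, gd e q, gc e q ε⟩ : CAlgebraData X) := by
  have hq0 : q ≠ 0 := ne_of_gt hq
  have key1 := generic_key1 e q ε hq0 hε1 hM
  have key2 := generic_key2 e q ε hq0 hε1 hM
  have hcard1 : (0:ℝ) ≤ (Fintype.card X : ℝ) - 1 := by
    have : 1 ≤ Fintype.card X := Fintype.card_pos_iff.2 ⟨e⟩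
    have := Nat.one_le_cast (α := ℝ) |>.2 this
    linarith
  have hnpos : 0 < 1 + ((Fintype.card X : ℝ) - 1) * q := by positivity
  refine ⟨rfl, fun r => rfl, gd_pos e q hq, ?_, ?_, ?_, ?_, ?_, by simp [gd], fun r => rfl, ?_⟩
  · intro s t; simp [gc]
  · intro r t
    by_cases hr : r = e
    · simp [gc, hr]
    · simp [gc, hr]
  · -- associativity
    intro r s t u
    set c := gc e q ε with hc
    set χ := gchi e q ε with hχ
    set μ := gmu e q with hμ
    set L : X → ℝ := fun u' => (∑ v, c r s v * c v t u') - (∑ v, c r v u' * c s t v) with hL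
    have hLchi : ∀ y, ∑ u', L u' * χ y u' = 0 := by
      intro y
      have e1 : ∑ u', (∑ v, c r s v * c v t u') * χ y u' = χ y r * χ y s * (χ y t) := by
        calc ∑ u', (∑ v, c r s v * c v t u') * χ y u'
            = ∑ u', ∑ v, c r s v * (c v t u' * χ y u') := by
              refine Finset.sum_congr rfl fun u' _ => ?_
              rw [Finset.sum_mul]
              exact Finset.sum_congr rfl fun v _ => by ring
          _ = ∑ v, ∑ u', c r s v * (c v t u' * χ y u') := Finset.sum_comm
          _ = ∑ v, c r s v * (χ y v * χ y t) := by
              refine Finset.sum_congr rfl fun v _ => ?_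
              rw [← Finset.mul_sum, key1 y v t]
          _ = (∑ v, c r s v * χ y v) * χ y t := by
              rw [Finset.sum_mul]
              exact Finset.sum_congr rfl fun v _ => by ring
          _ = χ y r * χ y s * χ y t := by rw [key1 y r s]
      have e2 : ∑ u', (∑ v, c r v u' * c s t v) * χ y u' = χ y r * χ y s * (χ y t) := by
        calc ∑ u', (∑ v, c r v u' * c s t v) * χ y u'
            = ∑ u', ∑ v, c s t v * (c r v u' * χ y u') := by
              refine Finset.sum_congr rfl fun u' _ => ?_
              rw [Finset.sum_mul]
              exact Finset.sum_congr rfl fun v _ => by ring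
          _ = ∑ v, ∑ u', c s t v * (c r v u' * χ y u') := Finset.sum_comm
          _ = ∑ v, c s t v * (χ y r * χ y v) := by
              refine Finset.sum_congr rfl fun v _ => ?_
              rw [← Finset.mul_sum, key1 y r v]
          _ = χ y r * (∑ v, c s t v * χ y v) := by
              rw [Finset.mul_sum]
              exact Finset.sum_congr rfl fun v _ => by ring
          _ = χ y r * χ y s * (χ y t) := by rw [key1 y s t]; ring
      have : ∑ u', L u' * χ y u'
          = (∑ u', (∑ v, c r s v * c v t u') * χ y u')
            - (∑ u', (∑ v, c r v u' * c s t v) * χ y u') := by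
        rw [← Finset.sum_sub_distrib]
        exact Finset.sum_congr rfl fun u' _ => by simp only [hL]; ring
      rw [this, e1, e2, sub_self]
    have hLzero : ∀ u₀, L u₀ = 0 := by
      intro u₀
      have h0 : ∑ y, μ y * χ y u₀ * (∑ u', L u' * χ y u') = 0 := by
        rw [Finset.sum_congr rfl fun y _ => by rw [hLchi y, mul_zero], Finset.sum_const,
          smul_zero]
      have h1 : ∑ y, μ y * χ y u₀ * (∑ u', L u' * χ y u')
          = ∑ u', L u' * (∑ y, μ y * (χ y u₀ * χ y u')) := by
        calc ∑ y, μ y * χ y u₀ * (∑ u', L u' * χ y u')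
            = ∑ y, ∑ u', L u' * (μ y * (χ y u₀ * χ y u')) := by
              refine Finset.sum_congr rfl fun y _ => ?_
              rw [Finset.mul_sum]
              exact Finset.sum_congr rfl fun u' _ => by ring
          _ = ∑ u', ∑ y, L u' * (μ y * (χ y u₀ * χ y u')) := Finset.sum_comm
          _ = ∑ u', L u' * (∑ y, μ y * (χ y u₀ * χ y u')) := by
              refine Finset.sum_congr rfl fun u' _ => ?_
              rw [← Finset.mul_sum]
      have h2 : ∑ u', L u' * (∑ y, μ y * (χ y u₀ * χ y u'))
          = L u₀ * ((1 + ((Fintype.card X : ℝ) - 1) * q) * gd e q u₀) := by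
        rw [Finset.sum_congr rfl fun u' _ => by rw [key2 u₀ u']]
        rw [Finset.sum_congr rfl (g := fun u' => if u₀ = u' then
          L u' * ((1 + ((Fintype.card X : ℝ) - 1) * q) * gd e q u₀) else 0)
          (fun u' _ => by by_cases h : u₀ = u' <;> simp [h])]
        rw [Finset.sum_ite_eq]
        simp
      have hfin : L u₀ * ((1 + ((Fintype.card X : ℝ) - 1) * q) * gd e q u₀) = 0 := by
        rw [← h2, ← h1, h0]
      have hne : ((1 + ((Fintype.card X : ℝ) - 1) * q) * gd e q u₀) ≠ 0 :=
        ne_of_gt (by have := gd_pos e q hq u₀; positivity)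
      exact (mul_eq_zero.1 hfin).resolve_right hne
    have := hLzero u
    simp only [hL] at this
    linarith [this]
  · intro r s t
    exact gc_comm e q ε r s t
  · -- C3
    intro r s
    by_cases hr : r = e
    · simp only [hr]
      simp [gc, gd]
    · by_cases hs : s = e
      · simp [gc, gd, hr, hs, Ne.symm hr]
      · simp [gc, gd, hr, hs, eq_comm]
  · -- C4
    intro r s
    have := key1 e r s
    have hχe : ∀ t, gchi e q ε e t = gd e q t := fun t => by simp [gchi]
    simp only [hχe] at this
    rw [← this]
    exact Finset.sum_congr rfl fun t _ => by ring

theorem generic_amorphic (e : X) (q ε : ℝ) (hq : 0 < q) (hε1 : ε = -1 ∨ ε = 1) :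
    IsAmorphic (⟨e, id, gd e q, gc e q ε⟩ : CAlgebraData X) := by
  intro π hπ heπ
  have hclass : ∀ S ∈ π, e ∈ S → S = ({e} : Finset X) := by
    intro S hS heS
    obtain ⟨W, hW, hWuniq⟩ := hπ.2 e
    rw [hWuniq S ⟨hS, heS⟩, hWuniq ({e} : Finset X) ⟨heπ, Finset.mem_singleton_self e⟩]
  have hdisj : ∀ S ∈ π, ∀ T ∈ π, ∀ x : X, x ∈ S → x ∈ T → S = T := by
    intro S hS T hT x hxS hxT
    obtain ⟨W, hW, hWuniq⟩ := hπ.2 x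
    rw [hWuniq S ⟨hS, hxS⟩, hWuniq T ⟨hT, hxT⟩]
  constructor
  · intro S hS
    simpa using hS
  · intro S hS T hT U hU u hu v hv
    dsimp only
    by_cases heU : e ∈ U
    · have hUe := hclass U hU heU
      rw [hUe] at hu hv
      rw [Finset.mem_singleton.1 hu, Finset.mem_singleton.1 hv]
    · have hue : u ≠ e := fun h => heU (h ▸ hu)
      have hve : v ≠ e := fun h => heU (h ▸ hv)
      have hmemiff : ∀ W ∈ π, (u ∈ W ↔ v ∈ W) := by
        intro W hW
        constructor
        · intro h; rw [← hdisj W hW U hU u h hu] at hv; exact hv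
        · intro h; rw [← hdisj W hW U hU v h hv] at hu; exact hu
      by_cases heS : e ∈ S
      · have hSe := hclass S hS heS
        rw [hSe]
        simp only [Finset.sum_singleton]
        have hgce : ∀ s w, gc e q ε e s w = if s = w then 1 else 0 := fun s w => by simp [gc]
        rw [Finset.sum_congr rfl fun s _ => hgce s u, Finset.sum_congr rfl fun s _ => hgce s v,
          Finset.sum_ite_eq', Finset.sum_ite_eq']
        by_cases huT : u ∈ T
        · rw [if_pos huT, if_pos ((hmemiff T hT).1 huT)]
        · rw [if_neg huT, if_neg (fun h => huT ((hmemiff T hT).2 h))]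
      · by_cases heT : e ∈ T
        · have hTe := hclass T hT heT
          have hgce : ∀ r w, r ∈ S → w ≠ e → gc e q ε r e w = if r = w then 1 else 0 := by
            intro r w hrS hwe
            have hre : r ≠ e := fun h => heS (h ▸ hrS)
            simp [gc, hre]
          have hLHS : ∀ w, w ≠ e → ∑ r ∈ S, ∑ s ∈ T, gc e q ε r s w
              = if w ∈ S then (1:ℝ) else 0 := by
            intro w hwe
            rw [hTe]
            rw [Finset.sum_congr rfl fun r hr => by
              rw [Finset.sum_singleton, hgce r w hr hwe]]
            rw [Finset.sum_ite_eq']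
          rw [hLHS u hue, hLHS v hve]
          by_cases huS : u ∈ S
          · rw [if_pos huS, if_pos ((hmemiff S hS).1 huS)]
          · rw [if_neg huS, if_neg (fun h => huS ((hmemiff S hS).2 h))]
        · -- main case
          have key : ∀ w, w ∈ U → ∑ r ∈ S, ∑ s ∈ T, gc e q ε r s w
              = (S.card : ℝ) * T.card
                + ε * ((if U = S then (T.card : ℝ) else 0) + (if U = T then (S.card : ℝ) else 0)
                  + ((S.filter (· ∈ T)).card : ℝ))
                + (if U = S ∧ U = T then 1 - ε * q else 0) := by
            intro w hw
            have hwe : w ≠ e := fun h => heU (h ▸ hw)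
            have hwS : w ∈ S ↔ U = S := ⟨fun h => hdisj U hU S hS w hw h, fun h => h ▸ hw⟩
            have hwT : w ∈ T ↔ U = T := ⟨fun h => hdisj U hU T hT w hw h, fun h => h ▸ hw⟩
            have expand : ∀ r ∈ S, ∀ s ∈ T, gc e q ε r s w =
                1 + (ε * (if r = w then 1 else 0) + ε * (if s = w then 1 else 0)
                  + ε * (if r = s then 1 else 0))
                + (if r = s ∧ s = w then 1 - ε * q else 0) := by
              intro r hr s hs
              have hre : r ≠ e := fun h => heS (h ▸ hr)
              have hse : s ≠ e := fun h => heT (h ▸ hs)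
              simp only [gc, if_neg hre, if_neg hse, if_neg hwe]
              ring
            rw [Finset.sum_congr rfl fun r hr => Finset.sum_congr rfl fun s hs =>
              expand r hr s hs]
            simp only [Finset.sum_add_distrib]
            have P0 : ∑ r ∈ S, ∑ s ∈ T, (1:ℝ) = (S.card : ℝ) * T.card := by
              simp [Finset.sum_const, nsmul_eq_mul]
            have P1 : ∑ r ∈ S, ∑ s ∈ T, (ε * if r = w then (1:ℝ) else 0)
                = ε * (if U = S then (T.card : ℝ) else 0) := by
              rw [Finset.sum_congr rfl (g := fun r => if r = w then (T.card : ℝ) * ε else 0)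
                (fun r _ => by
                  rw [Finset.sum_const, nsmul_eq_mul]
                  by_cases h : r = w <;> simp [h]), Finset.sum_ite_eq']
              by_cases h : U = S
              · rw [if_pos (hwS.2 h), if_pos h]; ring
              · rw [if_neg (fun hh => h (hwS.1 hh)), if_neg h]; ring
            have P2 : ∑ r ∈ S, ∑ s ∈ T, (ε * if s = w then (1:ℝ) else 0)
                = ε * (if U = T then (S.card : ℝ) else 0) := by
              rw [Finset.sum_congr rfl (g := fun r => if w ∈ T then ε else 0)
                (fun r _ => by
                  rw [Finset.sum_congr rfl (g := fun s => if s = w then ε else 0)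
                    (fun s _ => by by_cases h : s = w <;> simp [h]), Finset.sum_ite_eq'])]
              rw [Finset.sum_const, nsmul_eq_mul]
              by_cases h : U = T
              · rw [if_pos (hwT.2 h), if_pos h]; ring
              · rw [if_neg (fun hh => h (hwT.1 hh)), if_neg h]; ring
            have P3 : ∑ r ∈ S, ∑ s ∈ T, (ε * if r = s then (1:ℝ) else 0)
                = ε * ((S.filter (· ∈ T)).card : ℝ) := by
              rw [Finset.sum_congr rfl (g := fun r => if r ∈ T then ε else 0)
                (fun r _ => by
                  rw [Finset.sum_congr rfl (g := fun s => if r = s then ε else 0)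
                    (fun s _ => by by_cases h : r = s <;> simp [h]), Finset.sum_ite_eq])]
              rw [Finset.sum_ite, Finset.sum_const, Finset.sum_const]
              simp [mul_comm]
            have P4 : ∑ r ∈ S, ∑ s ∈ T, (if r = s ∧ s = w then 1 - ε * q else 0)
                = (if U = S ∧ U = T then 1 - ε * q else 0) := by
              rw [Finset.sum_congr rfl (g := fun r => if w ∈ T then
                  (if r = w then 1 - ε * q else 0) else 0)
                (fun r _ => by
                  rw [Finset.sum_congr rfl (g := fun s => if s = w then
                      (if r = w then 1 - ε * q else 0) else 0)
                    (fun s _ => by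
                      by_cases h1 : s = w <;> by_cases h2 : r = s <;>
                        simp [h1, h2] <;> simp [h2.trans h1] <;> tauto), Finset.sum_ite_eq'])]
              by_cases hT' : w ∈ T
              · simp only [if_pos hT']
                rw [Finset.sum_ite_eq']
                by_cases hS' : w ∈ S
                · rw [if_pos hS', if_pos ⟨hwS.1 hS', hwT.1 hT'⟩]
                · rw [if_neg hS', if_neg (fun h => hS' (hwS.2 h.1))]
              · simp only [if_neg hT']
                rw [if_neg (fun h => hT' (hwT.2 h.2))]
                simp
            rw [P0, P1, P2, P3, P4]
            ring
          rw [key u hu, key v hv]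

end Generic2
set_option maxHeartbeats 1000000 in
open Finset in
/-- any nontrivial amorphic `C`-algebra with integer structure constants is a
fusion of a generalized affine `C`-algebra, i.e. of a nontrivial amorphic homogeneous
`C`-algebra of the same degree `n` with common degree `√n + ε`. -/
theorem stmt_7 {R : Type*} [Fintype R] [DecidableEq R] (A : CAlgebraData R)
    (hA : IsCAlgebra A) (hnt : 4 ≤ Fintype.card R) (ham : IsAmorphic A)
    (hint : ∀ r s t, ∃ k : ℤ, A.c r s t = k)
    (ε : ℝ) (hε : IsSign A ε) :
    ∃ (R' : Type) (fR' : Fintype R') (dR' : DecidableEq R') (A' : CAlgebraData R')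
      (π' : Finset (Finset R')) (φ : R → Finset R'),
      @IsCAlgebra R' fR' dR' A' ∧
      4 ≤ @Fintype.card R' fR' ∧
      @IsAmorphic R' fR' dR' A' ∧
      @CAlgebraData.degree R' fR' A' = A.degree ∧
      (∀ u, u ≠ A'.e → A'.d u = Real.sqrt A.degree + ε) ∧
      @IsPartition R' fR' π' ∧ ({A'.e} : Finset R') ∈ π' ∧
      (∀ r, φ r ∈ π') ∧ Function.Injective φ ∧ (∀ S ∈ π', ∃ r, φ r = S) ∧
      φ A.e = {A'.e} ∧
      (∀ r, A.d r = ∑ u ∈ φ r, A'.d u) ∧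
      (∀ r s t, ∀ w ∈ φ t, A.c r s t = ∑ u ∈ φ r, ∑ v ∈ φ s, A'.c u v w) := by
  classical
  obtain ⟨hinv_e, hinv2, hdpos, hul, hur, hassoc, hanti, hC3, hde, hdinv, hC4⟩ := hA
  obtain ⟨hε1, hqpos, hsign⟩ := hε
  set n := A.degree with hn_def
  set q : ℝ := Real.sqrt A.degree + ε with hq_def
  have hε2 : ε ^ 2 = 1 := by rcases hε1 with rfl | rfl <;> norm_num
  have hn0 : 0 < n := Finset.sum_pos (fun r _ => hdpos r) ⟨A.e, Finset.mem_univ _⟩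
  have hq0 : q ≠ 0 := ne_of_gt hqpos
  have hsq : Real.sqrt n = q - ε := by rw [hq_def]; ring
  have hnq : n = (q - ε) ^ 2 := by rw [← hsq, Real.sq_sqrt hn0.le]
  have hnsum : ∑ x, A.d x = n := rfl
  clear_value n q
  -- fresh elements
  have hex : ∀ x y : R, ∃ z : R, z ≠ A.e ∧ z ≠ x ∧ z ≠ y := by
    intro x y
    have hc3 : ({A.e, x, y} : Finset R).card ≤ 3 := by
      have h1 : ({A.e, x, y} : Finset R).card ≤ ({x, y} : Finset R).card + 1 :=
        Finset.card_insert_le _ _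
      have h2 : ({x, y} : Finset R).card ≤ ({y} : Finset R).card + 1 :=
        Finset.card_insert_le _ _
      simp only [Finset.card_singleton] at h2
      omega
    have hne : (Finset.univ \ ({A.e, x, y} : Finset R)).Nonempty := by
      rw [← Finset.card_pos, Finset.card_sdiff_of_subset (Finset.subset_univ _), Finset.card_univ]
      omega
    obtain ⟨z, hz⟩ := hne
    rw [Finset.mem_sdiff] at hz
    have := hz.2
    simp only [Finset.mem_insert, Finset.mem_singleton, not_or] at this
    exact ⟨z, this.1, this.2.1, this.2.2⟩
  -- the 3-class partitions
  have part3 : ∀ r : R, r ≠ A.e →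
      IsPartition ({({A.e} : Finset R), {r}, Finset.univ \ {A.e, r}} : Finset (Finset R)) := by
    intro r hre
    have hsd_card : (Finset.univ \ ({A.e, r} : Finset R)).card = Fintype.card R - 2 := by
      rw [Finset.card_sdiff_of_subset (Finset.subset_univ _), Finset.card_univ,
        Finset.card_pair (Ne.symm hre)]
    constructor
    · intro S hS
      simp only [Finset.mem_insert, Finset.mem_singleton] at hS
      rcases hS with rfl | rfl | rfl
      · exact ⟨A.e, Finset.mem_singleton_self _⟩
      · exact ⟨r, Finset.mem_singleton_self _⟩
      · rw [← Finset.card_pos, hsd_card]; omega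
    · intro x
      by_cases hxe : x = A.e
      · refine ⟨{A.e}, ⟨by simp, by simp [hxe]⟩, ?_⟩
        rintro S ⟨hS, hxS⟩
        simp only [Finset.mem_insert, Finset.mem_singleton] at hS
        rcases hS with rfl | rfl | rfl
        · rfl
        · exact absurd ((Finset.mem_singleton.1 hxS).symm.trans hxe) hre
        · rw [Finset.mem_sdiff] at hxS
          exact absurd (by simp [hxe]) hxS.2
      · by_cases hxr : x = r
        · refine ⟨{r}, ⟨by simp, by simp [hxr]⟩, ?_⟩
          rintro S ⟨hS, hxS⟩
          simp only [Finset.mem_insert, Finset.mem_singleton] at hS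
          rcases hS with rfl | rfl | rfl
          · exact absurd (Finset.mem_singleton.1 hxS) hxe
          · rfl
          · rw [Finset.mem_sdiff] at hxS
            exact absurd (by simp [hxr]) hxS.2
        · refine ⟨Finset.univ \ {A.e, r}, ⟨by simp, by simp [hxe, hxr]⟩, ?_⟩
          rintro S ⟨hS, hxS⟩
          simp only [Finset.mem_insert, Finset.mem_singleton] at hS
          rcases hS with rfl | rfl | rfl
          · exact absurd (Finset.mem_singleton.1 hxS) hxe
          · exact absurd (Finset.mem_singleton.1 hxS) hxr
          · rfl
  -- Step 1 : the involution is the identity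
  have hinv_id : ∀ r, A.inv r = r := by
    intro r
    by_cases hre : r = A.e
    · rw [hre, hinv_e]
    by_contra hcon
    have hP := part3 r hre
    obtain ⟨hi, -⟩ := ham _ hP (by simp)
    have h1 := hi {r} (by simp)
    rw [Finset.image_singleton] at h1
    simp only [Finset.mem_insert, Finset.mem_singleton] at h1
    rcases h1 with h | h | h
    · exact hre (by rw [← hinv2 r, Finset.singleton_injective h, hinv_e])
    · exact hcon (Finset.singleton_injective h)
    · have hc1 : ({A.inv r} : Finset R).card = 1 := Finset.card_singleton _
      rw [h, Finset.card_sdiff_of_subset (Finset.subset_univ _), Finset.card_univ,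
        Finset.card_pair (Ne.symm hre)] at hc1
      omega
  have hcomm : ∀ r s t, A.c r s t = A.c s r t := fun r s t =>
    (hanti r s t).trans (by rw [hinv_id, hinv_id, hinv_id])
  have hC3' : ∀ r s, A.c r s A.e = if s = r then A.d r else 0 := fun r s => by
    rw [hC3, hinv_id]
  have hd0 : ∀ r, A.d r ≠ 0 := fun r => ne_of_gt (hdpos r)
  -- Step 3
  have hq3 : ∀ r s t, A.d t * A.c r s t = A.d r * A.c s t r := by
    intro r s t
    have h := hassoc r s t A.e
    have hL : ∑ v, A.c r s v * A.c v t A.e = A.c r s t * A.d t := by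
      rw [Finset.sum_congr rfl (g := fun v => if t = v then A.c r s v * A.d v else 0)
        (fun v _ => by
          rw [hC3' v t]
          by_cases hvt : t = v <;> simp [hvt])]
      rw [Finset.sum_ite_eq]
      simp
    have hR : ∑ v, A.c r v A.e * A.c s t v = A.d r * A.c s t r := by
      rw [Finset.sum_congr rfl (g := fun v => if v = r then A.d r * A.c s t v else 0)
        (fun v _ => by
          rw [hC3' r v]
          by_cases hvr : v = r <;> simp [hvr, mul_comm])]
      rw [Finset.sum_ite_eq']
      simp
    rw [hL, hR] at h
    rw [mul_comm]
    exact h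
  -- Step 4 : constancy of c r r u off {e, r}
  have hbcon : ∀ r, r ≠ A.e → ∀ u u', u ≠ A.e → u ≠ r → u' ≠ A.e → u' ≠ r →
      A.c r r u = A.c r r u' := by
    intro r hre u u' hue hur hu'e hu'r
    have hP := part3 r hre
    obtain ⟨-, hii⟩ := ham _ hP (by simp)
    have := hii {r} (by simp) {r} (by simp) (Finset.univ \ {A.e, r}) (by simp)
      u (by simp [Finset.mem_sdiff, hue, hur]) u' (by simp [Finset.mem_sdiff, hu'e, hu'r])
    simpa using this
  -- star relation
  have star : ∀ a b : R, a ≠ A.e → b ≠ A.e → a ≠ b →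
      A.d b * A.c a a b + A.d a * A.c b b a
        = A.d a * A.d b - (n - 1 - A.d a - A.d b) * (A.d a * A.d b / q ^ 2) := by
    intro a b hae hbe hab
    have h4 := hC4 a b
    set C : ℝ := A.d a * A.d b / q ^ 2 with hC
    have hsplit : ∑ t, A.d t * A.c a b t
        = (∑ t, A.d t * C) + ∑ t, A.d t * (A.c a b t - C) := by
      rw [← Finset.sum_add_distrib]
      exact Finset.sum_congr rfl fun t _ => by ring
    have hC4' : ∑ t, A.d t * C = n * C := by
      rw [← Finset.sum_mul, hnsum]
    have hrest : ∑ t, A.d t * (A.c a b t - C)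
        = A.d A.e * (A.c a b A.e - C) + A.d a * (A.c a b a - C) + A.d b * (A.c a b b - C)
          + ((Fintype.card R : ℝ) - 3) * 0 := by
      rw [sum_split3 Finset.univ _ 0 A.e a b (Finset.mem_univ _) (Finset.mem_univ _)
        (Finset.mem_univ _) (Ne.symm hae) (Ne.symm hbe) hab ?_]
      · rw [Finset.card_univ]
      · intro x _ hxe hxa hxb
        rw [hsign a b x hae hbe hxe hab (Ne.symm hxb) (Ne.symm hxa)]
        ring
    rw [hsplit, hC4', hrest] at h4
    have he0 : A.c a b A.e = 0 := by rw [hC3']; exact if_neg (fun h => hab h.symm)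
    rw [he0, hde] at h4
    have c1 : A.d a * A.c a b a = A.d b * A.c a a b := by
      have h := hq3 b a a
      rw [hcomm b a a] at h
      linarith
    have c2 : A.d b * A.c a b b = A.d a * A.c b b a := hq3 a b b
    linear_combination h4 - c1 - c2
  -- Step 6 : the value of c r r u
  have hbval : ∀ r, r ≠ A.e → ∀ u, u ≠ A.e → u ≠ r →
      A.c r r u = A.d r * (A.d r + ε * q) / q ^ 2 := by
    intro r hre u hue hur
    obtain ⟨z, hze, hzr, hzu⟩ := hex r u
    have hru : r ≠ u := Ne.symm hur
    have E1 := star r u hre hue hru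
    have E2 := star r z hre hze (Ne.symm hzr)
    have E3 := star u z hue hze (Ne.symm hzu)
    rw [hbcon r hre z u hze hzr hue hur] at E2
    rw [hbcon u hue z r hze hzu hre hru] at E3
    rw [hbcon z hze r u hre (fun h => hzr h.symm) hue (fun h => hzu h.symm)] at E2
    have hid : A.d z * (A.d r * A.d u - (n - 1 - A.d r - A.d u) * (A.d r * A.d u / q ^ 2))
        + A.d u * (A.d r * A.d z - (n - 1 - A.d r - A.d z) * (A.d r * A.d z / q ^ 2))
        - A.d r * (A.d u * A.d z - (n - 1 - A.d u - A.d z) * (A.d u * A.d z / q ^ 2))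
        = 2 * A.d u * A.d z * (A.d r * (A.d r + ε * q) / q ^ 2) := by
      rw [hnq]
      rcases hε1 with rfl | rfl <;> (field_simp; ring)
    have key : 2 * A.d u * A.d z * A.c r r u
        = 2 * A.d u * A.d z * (A.d r * (A.d r + ε * q) / q ^ 2) := by
      linear_combination A.d z * E1 + A.d u * E2 - A.d r * E3 + hid
    have h2 : (2 : ℝ) * A.d u * A.d z ≠ 0 := by
      have := hdpos u; have := hdpos z; positivity
    exact mul_left_cancel₀ h2 key
  -- Step 7 : the value of c r r r
  have hrrr : ∀ r, r ≠ A.e →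
      A.c r r r = A.d r * A.d r / q ^ 2 + 3 * ε * A.d r / q + 1 - ε * q := by
    intro r hre
    have h4 := hC4 r r
    set C : ℝ := A.d r * (A.d r + ε * q) / q ^ 2 with hC
    have hsplit : ∑ t, A.d t * A.c r r t
        = (∑ t, A.d t * C) + ∑ t, A.d t * (A.c r r t - C) := by
      rw [← Finset.sum_add_distrib]
      exact Finset.sum_congr rfl fun t _ => by ring
    have hC4' : ∑ t, A.d t * C = n * C := by
      rw [← Finset.sum_mul, hnsum]
    have hrest : ∑ t, A.d t * (A.c r r t - C)
        = A.d A.e * (A.c r r A.e - C) + A.d r * (A.c r r r - C)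
          + ((Fintype.card R : ℝ) - 2) * 0 := by
      rw [sum_split2 Finset.univ _ 0 A.e r (Finset.mem_univ _) (Finset.mem_univ _)
        (Ne.symm hre) ?_]
      · rw [Finset.card_univ]
      · intro x _ hxe hxr
        rw [hbval r hre x hxe hxr]
        ring
    rw [hsplit, hC4', hrest] at h4
    have he0 : A.c r r A.e = A.d r := by rw [hC3']; exact if_pos rfl
    rw [he0, hde] at h4
    have hid : A.d r * A.d r - n * C - (A.d r - C) + A.d r * C
        = A.d r * (A.d r * A.d r / q ^ 2 + 3 * ε * A.d r / q + 1 - ε * q) := by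
      rw [hC, hnq]
      rcases hε1 with rfl | rfl <;> (field_simp; ring)
    have key : A.d r * A.c r r r
        = A.d r * (A.d r * A.d r / q ^ 2 + 3 * ε * A.d r / q + 1 - ε * q) := by
      linear_combination h4 + hid
    exact mul_left_cancel₀ (hd0 r) key
  -- values of c r s r and c r s s
  have hval_rss : ∀ r s, r ≠ A.e → s ≠ A.e → r ≠ s →
      A.c r s s = A.d r * (A.d s + ε * q) / q ^ 2 := by
    intro r s hre hse hrs
    have h := hq3 r s s
    rw [hbval s hse r hre hrs] at h
    have : A.d s * A.c r s s = A.d s * (A.d r * (A.d s + ε * q) / q ^ 2) := by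
      rw [h]; ring
    exact mul_left_cancel₀ (hd0 s) this
  have hval_rsr : ∀ r s, r ≠ A.e → s ≠ A.e → r ≠ s →
      A.c r s r = A.d s * (A.d r + ε * q) / q ^ 2 := by
    intro r s hre hse hrs
    rw [hcomm r s r]
    exact hval_rss s r hse hre (Ne.symm hrs)
  -- Step 8 : integrality gives multiples of q
  have hm_ex : ∀ r : R, ∃ k : ℕ, (r ≠ A.e → 0 < k ∧ A.d r = k * q) ∧ (r = A.e → k = 0) := by
    intro r
    by_cases hre : r = A.e
    · exact ⟨0, fun h => absurd hre h, fun _ => rfl⟩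
    · obtain ⟨s, hse, hsr, -⟩ := hex r r
      obtain ⟨t, hte, htr, hts⟩ := hex r s
      obtain ⟨k1, hk1⟩ := hint r s s
      obtain ⟨k2, hk2⟩ := hint r s t
      have hv1 : A.c r s s = A.d r * (A.d s + ε * q) / q ^ 2 :=
        hval_rss r s hre hse (fun h => hsr h.symm)
      have hv2 : A.c r s t = A.d r * A.d s / q ^ 2 :=
        hsign r s t hre hse hte (fun h => hsr h.symm) (fun h => hts h.symm) (fun h => htr h.symm)
      have hdiff : ((k1 - k2 : ℤ) : ℝ) = ε * (A.d r / q) := by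
        push_cast
        rw [← hk1, ← hk2, hv1, hv2]
        field_simp
        ring
      have hdq : 0 < A.d r / q := div_pos (hdpos r) hqpos
      obtain ⟨z, hz⟩ : ∃ z : ℤ, (z : ℝ) = A.d r / q := by
        rcases hε1 with rfl | rfl
        · exact ⟨-(k1 - k2), by push_cast; push_cast at hdiff; linarith⟩
        · exact ⟨k1 - k2, by push_cast; push_cast at hdiff; linarith⟩
      have hzpos : 0 < z := by
        have : (0:ℝ) < (z:ℝ) := by rw [hz]; exact hdq
        exact_mod_cast this
      refine ⟨z.toNat, fun _ => ⟨by omega, ?_⟩, fun h => absurd h hre⟩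
      have : ((z.toNat : ℤ) : ℝ) = A.d r / q := by rw [Int.toNat_of_nonneg hzpos.le]; exact hz
      push_cast at this
      rw [this]
      field_simp
  choose m hm1 hm0 using hm_ex
  -- the construction
  have hm1' : ∀ r, r ≠ A.e → 0 < m r ∧ A.d r = m r * q := hm1
  have hm0' : m A.e = 0 := hm0 A.e rfl
  set S : Type _ := Option ((x : R) × Fin (m x)) with hS_def
  set E : S ≃ Fin (Fintype.card S) := Fintype.equivFin S with hE_def
  set R' : Type := Fin (Fintype.card S) with hR'_def
  set e' : R' := E none with he'_def
  set pr : R' → R := fun u => (E.symm u).elim A.e Sigma.fst with hpr_def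
  set φ : R → Finset R' := fun r => Finset.univ.filter (fun u => pr u = r) with hφ_def
  have hfst : ∀ p : (x : R) × Fin (m x), p.1 ≠ A.e := by
    rintro ⟨x, i⟩ h
    have hi : (i : ℕ) < m x := i.isLt
    have h0 : m x = 0 := by rw [show x = A.e from h]; exact hm0'
    omega
  have hpr_none : pr e' = A.e := by
    simp [hpr_def, he'_def]
  have hpr_eq_e : ∀ u : R', pr u = A.e ↔ u = e' := by
    intro u
    constructor
    · intro h
      rcases ho : E.symm u with - | p
      · rw [he'_def, ← ho, Equiv.apply_symm_apply]
      · rw [hpr_def] at h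
        simp only [ho, Option.elim] at h
        exact absurd h (hfst p)
    · intro h; rw [h, hpr_none]
  have hφmem : ∀ (u : R') (r : R), u ∈ φ r ↔ pr u = r := by
    intro u r
    simp [hφ_def]
  have hφe : φ A.e = {e'} := by
    ext u
    rw [hφmem, Finset.mem_singleton, hpr_eq_e]
  have hφcard : ∀ r, r ≠ A.e → (φ r).card = m r := by
    intro r hre
    have himg : φ r = (Finset.univ : Finset (Fin (m r))).image (fun i => E (some ⟨r, i⟩)) := by
      ext u
      rw [hφmem, Finset.mem_image]
      constructor
      · intro h
        rcases ho : E.symm u with - | p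
        · exfalso
          have : u = e' := by rw [he'_def, ← ho, Equiv.apply_symm_apply]
          rw [this, hpr_none] at h
          exact hre h.symm
        · rw [hpr_def] at h
          simp only [ho, Option.elim] at h
          obtain ⟨x, i⟩ := p
          dsimp at h
          subst h
          exact ⟨i, Finset.mem_univ i, by rw [← ho, Equiv.apply_symm_apply]⟩
      · rintro ⟨i, -, rfl⟩
        rw [hpr_def]
        simp
    rw [himg, Finset.card_image_of_injective _ (fun i j h =>
      sigma_mk_injective (Option.some_injective _ (E.injective h)))]
    simp
  have hφne : ∀ r, (φ r).Nonempty := by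
    intro r
    by_cases hre : r = A.e
    · rw [hre, hφe]; exact ⟨e', Finset.mem_singleton_self _⟩
    · exact ⟨E (some ⟨r, ⟨0, (hm1' r hre).1⟩⟩), by rw [hφmem, hpr_def]; simp⟩
  have hune : ∀ (u : R') (r : R), r ≠ A.e → u ∈ φ r → u ≠ e' := by
    intro u r hre hu h
    rw [hφmem] at hu
    rw [h, hpr_none] at hu
    exact hre hu.symm
  -- cardinality and sum facts
  have hsum_m : ∑ x : R, (m x : ℝ) * q = n - 1 := by
    have hterm : ∀ x : R, (m x : ℝ) * q = A.d x - (if x = A.e then 1 else 0) := by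
      intro x
      by_cases hxe : x = A.e
      · rw [if_pos hxe, hxe, hm0', hde]; norm_num
      · rw [if_neg hxe, (hm1' x hxe).2]; ring
    calc ∑ x : R, (m x : ℝ) * q
        = ∑ x : R, (A.d x - if x = A.e then 1 else 0) :=
          Finset.sum_congr rfl fun x _ => hterm x
      _ = (∑ x : R, A.d x) - ∑ x : R, (if x = A.e then (1:ℝ) else 0) :=
          Finset.sum_sub_distrib _ _
      _ = n - 1 := by
          rw [hnsum, Finset.sum_ite_eq' Finset.univ A.e (fun _ => (1:ℝ))]
          simp
  have hcardS : Fintype.card S = (∑ x : R, m x) + 1 := by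
    show Fintype.card (Option ((x : R) × Fin (m x))) = _
    rw [Fintype.card_option, Fintype.card_sigma]
    simp
  have hcardR' : Fintype.card R' = Fintype.card S := by
    show Fintype.card (Fin (Fintype.card S)) = Fintype.card S
    rw [Fintype.card_fin]
  have hM' : ((Fintype.card R' : ℝ) - 1) * q = (q - ε) ^ 2 - 1 := by
    rw [hcardR', hcardS]
    push_cast
    rw [add_sub_cancel_right, Finset.sum_mul, hsum_m, hnq]
  have hcard4 : 4 ≤ Fintype.card R' := by
    rw [hcardR', hcardS]
    have h1 : ∀ x ∈ Finset.univ.erase A.e, 1 ≤ m x := by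
      intro x hx
      exact (hm1' x (Finset.mem_erase.1 hx).1).1
    have h2 : (Finset.univ.erase A.e).card ≤ ∑ x ∈ Finset.univ.erase A.e, m x := by
      calc (Finset.univ.erase A.e).card = ∑ x ∈ Finset.univ.erase A.e, 1 := by simp
        _ ≤ _ := Finset.sum_le_sum h1
    have h3 : ∑ x ∈ Finset.univ.erase A.e, m x ≤ ∑ x : R, m x :=
      Finset.sum_le_sum_of_subset (Finset.subset_univ _)
    have h4 : (Finset.univ.erase A.e).card = Fintype.card R - 1 := by
      rw [Finset.card_erase_of_mem (Finset.mem_univ _), Finset.card_univ]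
    omega
  -- the generalized affine C-algebra
  have hCA' := generic_isC e' q ε hqpos hε1 hM'
  have hAm' := generic_amorphic (X := R') e' q ε hqpos hε1
  set A' : CAlgebraData R' := ⟨e', id, gd e' q, gc e' q ε⟩ with hA'_def
  have hdeg : CAlgebraData.degree A' = n := by
    show ∑ u : R', gd e' q u = n
    rw [gsum_d, hM', hnq]
    ring
  set π' : Finset (Finset R') := Finset.univ.image φ with hπ'_def
  have hπ'mem : ∀ r, φ r ∈ π' := fun r => Finset.mem_image_of_mem φ (Finset.mem_univ r)
  have hφinj : Function.Injective φ := by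
    intro a b h
    obtain ⟨u, hu⟩ := hφne a
    have hua : pr u = a := (hφmem u a).1 hu
    have hub : pr u = b := (hφmem u b).1 (h ▸ hu)
    rw [← hua, hub]
  have hπ'part : IsPartition π' := by
    constructor
    · intro T hT
      obtain ⟨r, -, rfl⟩ := Finset.mem_image.1 hT
      exact hφne r
    · intro u
      refine ⟨φ (pr u), ⟨hπ'mem _, (hφmem u (pr u)).2 rfl⟩, ?_⟩
      rintro T ⟨hT, huT⟩
      obtain ⟨r, -, rfl⟩ := Finset.mem_image.1 hT
      rw [(hφmem u r).1 huT]
  have hA'e : A'.e = e' := rfl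
  have he'π : ({A'.e} : Finset R') ∈ π' := by
    rw [hA'e, ← hφe]
    exact hπ'mem _
  have hdsum : ∀ r, A.d r = ∑ u ∈ φ r, A'.d u := by
    intro r
    by_cases hre : r = A.e
    · rw [hre, hφe, Finset.sum_singleton, hde]
      show (1:ℝ) = gd e' q e'
      simp [gd]
    · rw [sum_split0 (φ r) _ q (fun u hu => by
        show gd e' q u = q
        simp [gd, hune u r hre hu])]
      rw [hφcard r hre, (hm1' r hre).2]
    -- the fusion identity
  have hA'c : ∀ u v w', A'.c u v w' = gc e' q ε u v w' := fun _ _ _ => rfl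
  have hfusion : ∀ r s t : R, ∀ w ∈ φ t, A.c r s t = ∑ u ∈ φ r, ∑ v ∈ φ s, A'.c u v w := by
    intro r s t w hw
    have hwt : pr w = t := (hφmem w t).1 hw
    by_cases hr : r = A.e
    · rw [hr, hul s t, hφe, Finset.sum_singleton]
      have hstep : ∀ v, A'.c e' v w = if v = w then 1 else 0 := by
        intro v; rw [hA'c]; simp [gc]
      rw [Finset.sum_congr rfl fun v _ => hstep v, Finset.sum_ite_eq']
      by_cases hst : s = t
      · rw [if_pos ((hφmem w s).2 (by rw [hwt]; exact hst.symm)), if_pos hst]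
      · rw [if_neg (fun hmem => hst ((((hφmem w s).1 hmem).symm).trans hwt)), if_neg hst]
    · by_cases hs : s = A.e
      · rw [hs, hur r t, hφe]
        have hstep : ∀ u ∈ φ r, (∑ v ∈ ({e'} : Finset R'), A'.c u v w)
            = if u = w then (1:ℝ) else 0 := by
          intro u hu
          rw [Finset.sum_singleton, hA'c]
          have hu' : u ≠ e' := hune u r hr hu
          simp [gc, hu']
        rw [Finset.sum_congr rfl hstep, Finset.sum_ite_eq']
        by_cases hrt : r = t
        · rw [if_pos ((hφmem w r).2 (by rw [hwt]; exact hrt.symm)), if_pos hrt]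
        · rw [if_neg (fun hmem => hrt ((((hφmem w r).1 hmem).symm).trans hwt)), if_neg hrt]
      · by_cases ht : t = A.e
        · have hwnone : w = e' := by
            rw [ht, hφe] at hw
            exact Finset.mem_singleton.1 hw
          rw [ht, hC3' r s, hwnone]
          have hstep : ∀ u ∈ φ r, (∑ v ∈ φ s, A'.c u v e') = if u ∈ φ s then q else 0 := by
            intro u hu
            have hu' : u ≠ e' := hune u r hr hu
            have hinner : ∀ v ∈ φ s, A'.c u v e' = if u = v then q else 0 := by
              intro v hv
              have hv' : v ≠ e' := hune v s hs hv
              rw [hA'c]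
              simp [gc, hu', hv']
            rw [Finset.sum_congr rfl hinner, Finset.sum_ite_eq]
          rw [Finset.sum_congr rfl hstep]
          by_cases hsr : s = r
          · rw [if_pos hsr]
            rw [Finset.sum_congr rfl (g := fun u => q)
              (fun u hu => if_pos (by rw [hsr]; exact hu))]
            rw [Finset.sum_const, hφcard r hr, nsmul_eq_mul]
            exact (hm1 r hr).2
          · rw [if_neg hsr]
            rw [Finset.sum_congr rfl (g := fun u => (0:ℝ)) (fun u hu => if_neg (fun hmem =>
              hsr (((hφmem u s).1 hmem).symm.trans ((hφmem u r).1 hu))))]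
            simp
        · -- main case : r, s, t all distinct from e
          have hwne : w ≠ e' := fun h => ht (by rw [← hwt, h, hpr_none])
          have expand : ∀ u ∈ φ r, ∀ v ∈ φ s, A'.c u v w
              = 1 + (ε * (if u = w then 1 else 0) + ε * (if v = w then 1 else 0)
                + ε * (if u = v then 1 else 0)) + (if u = v ∧ v = w then 1 - ε * q else 0) := by
            intro u hu v hv
            have hu' : u ≠ e' := hune u r hr hu
            have hv' : v ≠ e' := hune v s hs hv
            rw [hA'c]
            simp only [gc, if_neg hu', if_neg hv', if_neg hwne]
            ring
          rw [Finset.sum_congr rfl fun u hu => Finset.sum_congr rfl fun v hv => expand u hu v hv]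
          simp only [Finset.sum_add_distrib]
          have hwmem : ∀ x : R, (w ∈ φ x) ↔ t = x := by
            intro x
            rw [hφmem, hwt]
          have P0 : ∑ u ∈ φ r, ∑ v ∈ φ s, (1:ℝ) = (m r : ℝ) * (m s : ℝ) := by
            rw [Finset.sum_congr rfl (g := fun u => ((m s : ℝ)))
              (fun u _ => by rw [Finset.sum_const, hφcard s hs, nsmul_eq_mul, mul_one]),
              Finset.sum_const, hφcard r hr, nsmul_eq_mul]
          have P1 : ∑ u ∈ φ r, ∑ v ∈ φ s, (ε * if u = w then (1:ℝ) else 0)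
              = ε * (if t = r then (m s : ℝ) else 0) := by
            rw [Finset.sum_congr rfl (g := fun u => if u = w then (m s : ℝ) * ε else 0)
              (fun u _ => by
                rw [Finset.sum_const, hφcard s hs, nsmul_eq_mul]
                by_cases h : u = w <;> simp [h]), Finset.sum_ite_eq']
            by_cases h : t = r
            · rw [if_pos ((hwmem r).2 h), if_pos h]; ring
            · rw [if_neg (fun hh => h ((hwmem r).1 hh)), if_neg h]; ring
          have P2 : ∑ u ∈ φ r, ∑ v ∈ φ s, (ε * if v = w then (1:ℝ) else 0)
              = ε * (if t = s then (m r : ℝ) else 0) := by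
            rw [Finset.sum_congr rfl (g := fun u => if w ∈ φ s then ε else 0)
              (fun u _ => by
                rw [Finset.sum_congr rfl (g := fun v => if v = w then ε else 0)
                  (fun v _ => by by_cases h : v = w <;> simp [h]), Finset.sum_ite_eq'])]
            rw [Finset.sum_const, hφcard r hr, nsmul_eq_mul]
            by_cases h : t = s
            · rw [if_pos ((hwmem s).2 h), if_pos h]; ring
            · rw [if_neg (fun hh => h ((hwmem s).1 hh)), if_neg h]; ring
          have P3 : ∑ u ∈ φ r, ∑ v ∈ φ s, (ε * if u = v then (1:ℝ) else 0)
              = ε * (if r = s then (m r : ℝ) else 0) := by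
            rw [Finset.sum_congr rfl (g := fun u => if u ∈ φ s then ε else 0)
              (fun u _ => by
                rw [Finset.sum_congr rfl (g := fun v => if u = v then ε else 0)
                  (fun v _ => by by_cases h : u = v <;> simp [h]), Finset.sum_ite_eq])]
            by_cases h : r = s
            · rw [Finset.sum_congr rfl (g := fun u => ε)
                (fun u hu => if_pos (by rw [← h]; exact hu))]
              rw [Finset.sum_const, hφcard r hr, nsmul_eq_mul, if_pos h]
              ring
            · rw [Finset.sum_congr rfl (g := fun u => (0:ℝ)) (fun u hu => if_neg (fun hmem =>
                h (((hφmem u r).1 hu).symm.trans ((hφmem u s).1 hmem))))]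
              rw [if_neg h]
              simp
          have P4 : ∑ u ∈ φ r, ∑ v ∈ φ s, (if u = v ∧ v = w then 1 - ε * q else 0)
              = if t = r ∧ t = s then 1 - ε * q else 0 := by
            rw [Finset.sum_congr rfl (g := fun u => if w ∈ φ s then
                (if u = w then 1 - ε * q else 0) else 0)
              (fun u _ => by
                rw [Finset.sum_congr rfl (g := fun v => if v = w then
                    (if u = w then 1 - ε * q else 0) else 0)
                  (fun v _ => by
                    by_cases h1 : v = w <;> by_cases h2 : u = v <;>
                      simp [h1, h2] <;> simp [h2.trans h1] <;> tauto), Finset.sum_ite_eq'])]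
            by_cases hT' : w ∈ φ s
            · simp only [if_pos hT']
              rw [Finset.sum_ite_eq']
              by_cases hS' : w ∈ φ r
              · rw [if_pos hS', if_pos ⟨(hwmem r).1 hS', (hwmem s).1 hT'⟩]
              · rw [if_neg hS', if_neg (fun h => hS' ((hwmem r).2 h.1))]
            · simp only [if_neg hT']
              rw [if_neg (fun h => hT' ((hwmem s).2 h.2))]
              simp
          rw [P0, P1, P2, P3, P4]
          have hdr := (hm1 r hr).2
          have hds := (hm1 s hs).2
          by_cases hrs : r = s
          · by_cases hrt : r = t
            · have hLHS : A.c r s t = A.c r r r := by rw [← hrs, ← hrt]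
              rw [hLHS, hrrr r hr, if_pos hrt.symm, if_pos (hrt.symm.trans hrs),
                if_pos hrs, if_pos ⟨hrt.symm, hrt.symm.trans hrs⟩, hdr]
              simp only [← hrs]
              field_simp
              ring
            · have hLHS : A.c r s t = A.d r * (A.d r + ε * q) / q ^ 2 := by
                rw [← hrs]
                exact hbval r hr t ht (fun h => hrt h.symm)
              rw [hLHS, if_neg (fun h => hrt h.symm), if_neg (fun h => hrt (hrs.trans h.symm)),
                if_pos hrs, if_neg (fun h => hrt h.1.symm), hdr]
              simp only [← hrs]
              field_simp
              ring
          · by_cases hrt : r = t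
            · have hLHS : A.c r s t = A.d s * (A.d r + ε * q) / q ^ 2 := by
                rw [← hrt]
                exact hval_rsr r s hr hs hrs
              rw [hLHS, if_pos hrt.symm, if_neg (fun h => hrs (hrt.trans h)),
                if_neg hrs, if_neg (fun h => hrs (hrt.trans h.2)), hdr, hds]
              field_simp
              ring
            · by_cases hst : s = t
              · have hLHS : A.c r s t = A.d r * (A.d s + ε * q) / q ^ 2 := by
                  rw [← hst]
                  exact hval_rss r s hr hs hrs
                rw [hLHS, if_neg (fun h => hrt h.symm), if_pos hst.symm, if_neg hrs,
                  if_neg (fun h => hrt h.1.symm), hdr, hds]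
                field_simp
                ring
              · have hLHS : A.c r s t = A.d r * A.d s / q ^ 2 :=
                  hsign r s t hr hs ht hrs hst hrt
                rw [hLHS, if_neg (fun h => hrt h.symm), if_neg (fun h => hst h.symm), if_neg hrs,
                  if_neg (fun h => hrt h.1.symm), hdr, hds]
                field_simp
                ring
  refine ⟨R', inferInstance, inferInstance, A', π', φ, hCA', hcard4, hAm',
    hdeg, ?_, hπ'part, he'π, hπ'mem, hφinj, ?_, ?_, hdsum, hfusion⟩
  · intro u hu
    rw [hA'e] at hu
    show gd e' q u = q
    simp [gd, hu]
  · intro T hT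
    obtain ⟨r, -, rfl⟩ := Finset.mem_image.1 hT
    exact ⟨r, rfl⟩
  · rw [hA'e]
    exact hφe
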